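/- Let u be a profile of true (nonnegative) valuations and let s be a pure Nash equilibrium of Probabilistic Serial at u. Then for every agent i and every item j, the expected utility of agent i at s satisfies ∑_ℓ p_{iℓ}(s)·u_i(ℓ) ≥ (1/4)·t_j(s)·u_i(j). -/

import Mathlib

/-- A unit-sum valuation over `n` items. -/
def UnitSum {n : ℕ} (v : Fin n → ℝ) : Prop :=
  (∀ j, 0 ≤ v j) ∧ ∑ j, v j = 1

/-- A unit-range valuation over `n` items. -/
def UnitRange {n : ℕ} (v : Fin n → ℝ) : Prop :=
  (∀ j, 0 ≤ v j ∧ v j ≤ 1) ∧ (∃ j, v j = 1) ∧ (∃ j, v j = 0)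

/-- The optimal social welfare: the maximum over matchings (permutations of the
items) of the total utility. -/
noncomputable def SWopt {n : ℕ} (u : Fin n → Fin n → ℝ) : ℝ :=
  Finset.univ.sup' ⟨Equiv.refl (Fin n), Finset.mem_univ _⟩
    (fun μ : Equiv.Perm (Fin n) => ∑ i, u i (μ i))
/-- The state of the Probabilistic Serial eating process: `rem j` is the remaining
amount of item `j`, `cons i j` the amount of item `j` eaten so far by agent `i`,
`time` the current time, and `fin j` the time at which item `j` was fully consumed. -/
structure PSState (n : ℕ) where
  rem : Fin n → ℝ
  cons : Fin n → Fin n → ℝ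
  time : ℝ
  fin : Fin n → ℝ

open Classical in
/-- One phase of the Probabilistic Serial eating process: while some item remains,
every agent eats at rate 1 from her most preferred remaining item (preference
orderings are given as bijections from ranks to items, rank `0` being the most
preferred); the phase lasts until the first moment a currently eaten item is
exhausted. -/
noncomputable def psStep {n : ℕ} (s : Fin n → (Fin n ≃ Fin n)) (st : PSState n) :
    PSState n :=
  let avail : Finset (Fin n) := Finset.univ.filter (fun j => 0 < st.rem j)
  if h : avail.Nonempty then
    -- the most preferred still-available item of each agent
    let top : Fin n → Fin n := fun i =>
      let R : Finset (Fin n) := Finset.univ.filter (fun r => s i r ∈ avail)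
      if hR : R.Nonempty then s i (R.min' hR) else h.choose
    -- the number of agents currently eating item `j`
    let rate : Fin n → ℕ := fun j => (Finset.univ.filter (fun i => top i = j)).card
    -- the duration of the phase: first time an eaten item is exhausted
    let Δ : ℝ := sInf {x : ℝ | ∃ j ∈ avail, 0 < rate j ∧ x = st.rem j / (rate j : ℝ)}
    { rem := fun j => st.rem j - (rate j : ℝ) * Δ
      cons := fun i j => st.cons i j + (if top i = j then Δ else 0)
      time := st.time + Δ
      fin := fun j =>
        if 0 < st.rem j ∧ st.rem j - (rate j : ℝ) * Δ ≤ 0 then st.time + Δ else st.fin j }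
  else st

/-- The final state of the Probabilistic Serial eating process (there are at most
`n` phases, since in each phase at least one item is exhausted). -/
noncomputable def psFinal {n : ℕ} (s : Fin n → (Fin n ≃ Fin n)) : PSState n :=
  (psStep s)^[n] ⟨fun _ => 1, fun _ _ => 0, 0, fun _ => 1⟩

/-- `psProb s i j` is the probability that agent `i` receives item `j` under
Probabilistic Serial at report profile `s`, i.e. the amount of item `j` eaten by
agent `i`. -/
noncomputable def psProb {n : ℕ} (s : Fin n → (Fin n ≃ Fin n)) (i j : Fin n) : ℝ :=
  (psFinal s).cons i j

/-- `psTime s j` is the time at which item `j` is fully consumed under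
Probabilistic Serial at report profile `s`. -/
noncomputable def psTime {n : ℕ} (s : Fin n → (Fin n ≃ Fin n)) (j : Fin n) : ℝ :=
  (psFinal s).fin j

/-- The expected social welfare of Probabilistic Serial at report profile `s`
under true valuation profile `u`. -/
noncomputable def psSW {n : ℕ} (u : Fin n → Fin n → ℝ) (s : Fin n → (Fin n ≃ Fin n)) : ℝ :=
  ∑ i, ∑ j, psProb s i j * u i j

/-- `s` is a pure Nash equilibrium of Probabilistic Serial at true valuation
profile `u`: no agent can strictly increase her expected utility by unilaterally
reporting a different ordering. -/
def PSNash {n : ℕ} (u : Fin n → Fin n → ℝ) (s : Fin n → (Fin n ≃ Fin n)) : Prop :=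
  ∀ (i : Fin n) (s' : Fin n ≃ Fin n),
    ∑ j, psProb (Function.update s i s') i j * u i j ≤ ∑ j, psProb s i j * u i j

namespace PSAux

open Finset

variable {n : ℕ}

/-- The set of available items. -/
noncomputable def availSet (st : PSState n) : Finset (Fin n) := Finset.univ.filter (fun j => 0 < st.rem j)

open Classical in
/-- Mirror of the `top` let-binding in `psStep`. -/
noncomputable def topOf (s : Fin n → (Fin n ≃ Fin n)) (st : PSState n)
    (h : (availSet st).Nonempty) (i : Fin n) : Fin n :=
  let R : Finset (Fin n) := Finset.univ.filter (fun r => s i r ∈ availSet st)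
  if hR : R.Nonempty then s i (R.min' hR) else h.choose

open Classical in
noncomputable def rateOf (s : Fin n → (Fin n ≃ Fin n)) (st : PSState n)
    (h : (availSet st).Nonempty) (j : Fin n) : ℕ :=
  (Finset.univ.filter (fun i => topOf s st h i = j)).card

open Classical in
noncomputable def deltaOf (s : Fin n → (Fin n ≃ Fin n)) (st : PSState n)
    (h : (availSet st).Nonempty) : ℝ :=
  sInf {x : ℝ | ∃ j ∈ availSet st, 0 < rateOf s st h j ∧ x = st.rem j / (rateOf s st h j : ℝ)}

theorem psStep_eq (s : Fin n → (Fin n ≃ Fin n)) (st : PSState n)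
    (h : (availSet st).Nonempty) :
    psStep s st =
      { rem := fun j => st.rem j - (rateOf s st h j : ℝ) * deltaOf s st h
        cons := fun i j => st.cons i j + (if topOf s st h i = j then deltaOf s st h else 0)
        time := st.time + deltaOf s st h
        fin := fun j =>
          if 0 < st.rem j ∧ st.rem j - (rateOf s st h j : ℝ) * deltaOf s st h ≤ 0 then
            st.time + deltaOf s st h
          else st.fin j } := by
  simp only [availSet] at h
  rw [psStep, dif_pos h]
  rfl

theorem psStep_eq' (s : Fin n → (Fin n ≃ Fin n)) (st : PSState n)
    (h : ¬ (availSet st).Nonempty) : psStep s st = st := by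
  simp only [availSet] at h
  rw [psStep, dif_neg h]

theorem psStep_rem (s : Fin n → (Fin n ≃ Fin n)) (st : PSState n)
    (h : (availSet st).Nonempty) (j : Fin n) :
    (psStep s st).rem j = st.rem j - (rateOf s st h j : ℝ) * deltaOf s st h := by
  rw [psStep_eq s st h]

theorem psStep_cons (s : Fin n → (Fin n ≃ Fin n)) (st : PSState n)
    (h : (availSet st).Nonempty) (i j : Fin n) :
    (psStep s st).cons i j
      = st.cons i j + (if topOf s st h i = j then deltaOf s st h else 0) := by
  rw [psStep_eq s st h]

theorem psStep_time (s : Fin n → (Fin n ≃ Fin n)) (st : PSState n)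
    (h : (availSet st).Nonempty) :
    (psStep s st).time = st.time + deltaOf s st h := by
  rw [psStep_eq s st h]

theorem psStep_fin (s : Fin n → (Fin n ≃ Fin n)) (st : PSState n)
    (h : (availSet st).Nonempty) (j : Fin n) :
    (psStep s st).fin j
      = if 0 < st.rem j ∧ st.rem j - (rateOf s st h j : ℝ) * deltaOf s st h ≤ 0 then
          st.time + deltaOf s st h
        else st.fin j := by
  rw [psStep_eq s st h]

theorem mem_availSet {st : PSState n} {j : Fin n} : j ∈ availSet st ↔ 0 < st.rem j := by
  simp [availSet]

theorem topOf_mem (s : Fin n → (Fin n ≃ Fin n)) (st : PSState n)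
    (h : (availSet st).Nonempty) (i : Fin n) : topOf s st h i ∈ availSet st := by
  obtain ⟨j0, hj0⟩ := h
  have hR : (Finset.univ.filter (fun r => s i r ∈ availSet st)).Nonempty := by
    refine ⟨(s i).symm j0, ?_⟩
    simp [hj0]
  unfold topOf
  simp only [dif_pos hR]
  have := Finset.min'_mem _ hR
  simpa using this

/-- If `j` is available and every strictly better-ranked item is unavailable, then
`j` is the top item. -/
theorem topOf_eq (s : Fin n → (Fin n ≃ Fin n)) (st : PSState n)
    (h : (availSet st).Nonempty) (i : Fin n) {j : Fin n} (hj : j ∈ availSet st)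
    (hb : ∀ r : Fin n, r < (s i).symm j → s i r ∉ availSet st) :
    topOf s st h i = j := by
  have hR : (Finset.univ.filter (fun r => s i r ∈ availSet st)).Nonempty := by
    refine ⟨(s i).symm j, ?_⟩
    simp [hj]
  rw [topOf]
  simp only [dif_pos hR]
  have hmem := Finset.min'_mem _ hR
  have hle : (Finset.univ.filter (fun r => s i r ∈ availSet st)).min' hR ≤ (s i).symm j := by
    apply Finset.min'_le
    simp [hj]
  rcases lt_or_eq_of_le hle with hlt | heq
  · exfalso
    exact hb _ hlt (by simpa using hmem)
  · rw [heq]; simp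

/-- If `j` is the top item of agent `i`, every strictly better-ranked item is
unavailable. -/
theorem topOf_better_not_mem (s : Fin n → (Fin n ≃ Fin n)) (st : PSState n)
    (h : (availSet st).Nonempty) {i j : Fin n} (htop : topOf s st h i = j)
    {m : Fin n} (hm : (s i).symm m < (s i).symm j) : m ∉ availSet st := by
  have hR : (Finset.univ.filter (fun r => s i r ∈ availSet st)).Nonempty := by
    obtain ⟨j0, hj0⟩ := h
    exact ⟨(s i).symm j0, by simp [hj0]⟩
  rw [topOf] at htop
  simp only [dif_pos hR] at htop
  intro hmem
  have h1 : (Finset.univ.filter (fun r => s i r ∈ availSet st)).min' hR ≤ (s i).symm m := by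
    apply Finset.min'_le; simp [hmem]
  have h2 : (s i).symm j = (Finset.univ.filter (fun r => s i r ∈ availSet st)).min' hR := by
    rw [← htop]; simp
  omega

theorem rateOf_eq_zero (s : Fin n → (Fin n ≃ Fin n)) (st : PSState n)
    (h : (availSet st).Nonempty) {j : Fin n} (hj : j ∉ availSet st) :
    rateOf s st h j = 0 := by
  rw [rateOf, Finset.card_eq_zero, Finset.filter_eq_empty_iff]
  intro i _
  intro htop
  exact hj (htop ▸ topOf_mem s st h i)

theorem rateOf_top_pos (s : Fin n → (Fin n ≃ Fin n)) (st : PSState n)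
    (h : (availSet st).Nonempty) (i : Fin n) : 0 < rateOf s st h (topOf s st h i) := by
  rw [rateOf, Finset.card_pos]
  exact ⟨i, by simp⟩

theorem delta_mem (s : Fin n → (Fin n ≃ Fin n)) (st : PSState n)
    (h : (availSet st).Nonempty) :
    ∃ j ∈ availSet st, 0 < rateOf s st h j ∧
      deltaOf s st h = st.rem j / (rateOf s st h j : ℝ) := by
  obtain ⟨j0, hj0⟩ := h
  set S : Set ℝ :=
    {x : ℝ | ∃ j ∈ availSet st, 0 < rateOf s st ⟨j0, hj0⟩ j ∧
      x = st.rem j / (rateOf s st ⟨j0, hj0⟩ j : ℝ)} with hS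
  have hSne : S.Nonempty := by
    refine ⟨st.rem (topOf s st ⟨j0, hj0⟩ j0) / (rateOf s st ⟨j0, hj0⟩ (topOf s st ⟨j0, hj0⟩ j0) : ℝ),
      topOf s st ⟨j0, hj0⟩ j0, topOf_mem _ _ _ _, rateOf_top_pos _ _ _ _, rfl⟩
  have hSfin : S.Finite := by
    have : S ⊆ (fun j => st.rem j / (rateOf s st ⟨j0, hj0⟩ j : ℝ)) '' Set.univ := by
      rintro x ⟨j, _, _, rfl⟩
      exact ⟨j, trivial, rfl⟩
    exact Set.Finite.subset ((Set.finite_univ).image _) this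
  have hmem : sInf S ∈ S := hSne.csInf_mem hSfin
  rw [hS] at hmem
  obtain ⟨j, hj, hr, hx⟩ := hmem
  exact ⟨j, hj, hr, hx⟩

theorem delta_pos (s : Fin n → (Fin n ≃ Fin n)) (st : PSState n)
    (h : (availSet st).Nonempty) : 0 < deltaOf s st h := by
  obtain ⟨j, hj, hr, hx⟩ := delta_mem s st h
  rw [hx]
  exact div_pos (mem_availSet.1 hj) (by exact_mod_cast hr)

theorem delta_le (s : Fin n → (Fin n ≃ Fin n)) (st : PSState n)
    (h : (availSet st).Nonempty) {j : Fin n} (hj : j ∈ availSet st)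
    (hr : 0 < rateOf s st h j) :
    deltaOf s st h ≤ st.rem j / (rateOf s st h j : ℝ) := by
  obtain ⟨j0, hj0⟩ := h
  set S : Set ℝ :=
    {x : ℝ | ∃ j ∈ availSet st, 0 < rateOf s st ⟨j0, hj0⟩ j ∧
      x = st.rem j / (rateOf s st ⟨j0, hj0⟩ j : ℝ)} with hS
  have hSfin : S.Finite := by
    have : S ⊆ (fun j => st.rem j / (rateOf s st ⟨j0, hj0⟩ j : ℝ)) '' Set.univ := by
      rintro x ⟨j, _, _, rfl⟩
      exact ⟨j, trivial, rfl⟩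
    exact Set.Finite.subset ((Set.finite_univ).image _) this
  exact csInf_le hSfin.bddBelow ⟨j, hj, hr, rfl⟩

/-- `rate j * Δ ≤ rem j` for every item. -/
theorem rate_mul_delta_le (s : Fin n → (Fin n ≃ Fin n)) (st : PSState n)
    (h : (availSet st).Nonempty) (hpos : ∀ j, 0 ≤ st.rem j) (j : Fin n) :
    (rateOf s st h j : ℝ) * deltaOf s st h ≤ st.rem j := by
  rcases Nat.eq_zero_or_pos (rateOf s st h j) with hr | hr
  · simp [hr, hpos j]
  · by_cases hj : j ∈ availSet st
    · have hdle := delta_le s st h hj hr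
      have hrpos : (0:ℝ) < (rateOf s st h j : ℝ) := by exact_mod_cast hr
      calc (rateOf s st h j : ℝ) * deltaOf s st h
          ≤ (rateOf s st h j : ℝ) * (st.rem j / (rateOf s st h j : ℝ)) := by
            exact mul_le_mul_of_nonneg_left hdle (le_of_lt hrpos)
        _ = st.rem j := by field_simp
    · exact absurd (rateOf_eq_zero s st h hj) (by omega)
/-- The state after `k` phases. -/
noncomputable def stAt (s : Fin n → (Fin n ≃ Fin n)) (k : ℕ) : PSState n :=
  (psStep s)^[k] ⟨fun _ => 1, fun _ _ => 0, 0, fun _ => 1⟩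

theorem stAt_succ (s : Fin n → (Fin n ≃ Fin n)) (k : ℕ) :
    stAt s (k + 1) = psStep s (stAt s k) := by
  rw [stAt, Function.iterate_succ_apply', ← stAt]

theorem stAt_zero_rem (s : Fin n → (Fin n ≃ Fin n)) (j : Fin n) : (stAt s 0).rem j = 1 := rfl
theorem stAt_zero_cons (s : Fin n → (Fin n ≃ Fin n)) (i j : Fin n) :
    (stAt s 0).cons i j = 0 := rfl
theorem stAt_zero_time (s : Fin n → (Fin n ≃ Fin n)) : (stAt s 0).time = 0 := rfl
theorem stAt_zero_fin (s : Fin n → (Fin n ≃ Fin n)) (j : Fin n) : (stAt s 0).fin j = 1 := rfl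

theorem psFinal_eq (s : Fin n → (Fin n ≃ Fin n)) : psFinal s = stAt s n := rfl

theorem rem_nonneg (s : Fin n → (Fin n ≃ Fin n)) : ∀ k, ∀ j : Fin n, 0 ≤ (stAt s k).rem j := by
  intro k
  induction k with
  | zero => intro j; rw [stAt_zero_rem]; norm_num
  | succ k ih =>
    intro j
    rw [stAt_succ]
    by_cases h : (availSet (stAt s k)).Nonempty
    · rw [psStep_rem s _ h j]
      linarith [rate_mul_delta_le s _ h ih j]
    · rw [psStep_eq' s _ h]; exact ih j

theorem rem_succ_le (s : Fin n → (Fin n ≃ Fin n)) (k : ℕ) (j : Fin n) :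
    (stAt s (k + 1)).rem j ≤ (stAt s k).rem j := by
  rw [stAt_succ]
  by_cases h : (availSet (stAt s k)).Nonempty
  · rw [psStep_rem s _ h j]
    have h1 : (0:ℝ) ≤ (rateOf s _ h j : ℝ) := Nat.cast_nonneg _
    have h2 : 0 < deltaOf s _ h := delta_pos s _ h
    nlinarith
  · rw [psStep_eq' s _ h]

theorem avail_succ_subset (s : Fin n → (Fin n ≃ Fin n)) (k : ℕ) :
    availSet (stAt s (k + 1)) ⊆ availSet (stAt s k) := by
  intro j hj
  rw [mem_availSet] at hj ⊢
  exact lt_of_lt_of_le hj (rem_succ_le s k j)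

theorem avail_subset (s : Fin n → (Fin n ≃ Fin n)) {k m : ℕ} (h : k ≤ m) :
    availSet (stAt s m) ⊆ availSet (stAt s k) := by
  induction m with
  | zero => simp_all
  | succ m ih =>
    rcases Nat.eq_or_lt_of_le h with rfl | h'
    · exact subset_rfl
    · exact (avail_succ_subset s m).trans (ih (Nat.lt_succ_iff.mp h'))

theorem time_succ_le (s : Fin n → (Fin n ≃ Fin n)) (k : ℕ) :
    (stAt s k).time ≤ (stAt s (k + 1)).time := by
  rw [stAt_succ]
  by_cases h : (availSet (stAt s k)).Nonempty
  · rw [psStep_time s _ h]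
    linarith [delta_pos s _ h]
  · rw [psStep_eq' s _ h]

theorem time_mono (s : Fin n → (Fin n ≃ Fin n)) {k m : ℕ} (h : k ≤ m) :
    (stAt s k).time ≤ (stAt s m).time := by
  induction m with
  | zero => simp_all
  | succ m ih =>
    rcases Nat.eq_or_lt_of_le h with rfl | h'
    · exact le_rfl
    · exact (ih (Nat.lt_succ_iff.mp h')).trans (time_succ_le s m)

theorem time_nonneg (s : Fin n → (Fin n ≃ Fin n)) (k : ℕ) : 0 ≤ (stAt s k).time := by
  have := time_mono s (Nat.zero_le k)
  rw [stAt_zero_time] at this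
  exact this

theorem cons_succ_le (s : Fin n → (Fin n ≃ Fin n)) (k : ℕ) (i j : Fin n) :
    (stAt s k).cons i j ≤ (stAt s (k + 1)).cons i j := by
  rw [stAt_succ]
  by_cases h : (availSet (stAt s k)).Nonempty
  · rw [psStep_cons s _ h]
    have := delta_pos s _ h
    split <;> linarith
  · rw [psStep_eq' s _ h]

theorem cons_mono (s : Fin n → (Fin n ≃ Fin n)) {k m : ℕ} (h : k ≤ m) (i j : Fin n) :
    (stAt s k).cons i j ≤ (stAt s m).cons i j := by
  induction m with
  | zero => simp_all
  | succ m ih =>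
    rcases Nat.eq_or_lt_of_le h with rfl | h'
    · exact le_rfl
    · exact (ih (Nat.lt_succ_iff.mp h')).trans (cons_succ_le s m i j)

theorem cons_nonneg (s : Fin n → (Fin n ≃ Fin n)) (k : ℕ) (i j : Fin n) :
    0 ≤ (stAt s k).cons i j := by
  have := cons_mono s (Nat.zero_le k) i j
  rw [stAt_zero_cons] at this
  exact this

/-- In each phase with available items, at least one item is exhausted. -/
theorem card_avail_succ_lt (s : Fin n → (Fin n ≃ Fin n)) (k : ℕ)
    (h : (availSet (stAt s k)).Nonempty) :
    (availSet (stAt s (k + 1))).card < (availSet (stAt s k)).card := by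
  obtain ⟨j, hj, hr, hx⟩ := delta_mem s _ h
  have hdead : (stAt s (k + 1)).rem j = 0 := by
    rw [stAt_succ, psStep_rem s _ h j, hx]
    have : (rateOf s (stAt s k) h j : ℝ) ≠ 0 := by exact_mod_cast Nat.pos_iff_ne_zero.mp hr
    field_simp
    ring
  apply Finset.card_lt_card
  constructor
  · exact avail_succ_subset s k
  · intro hsub
    have := hsub hj
    rw [mem_availSet, hdead] at this
    exact lt_irrefl 0 this

theorem avail_final (s : Fin n → (Fin n ≃ Fin n)) : availSet (stAt s n) = ∅ := by
  have key : ∀ k, (availSet (stAt s k)) = ∅ ∨ (availSet (stAt s k)).card + k ≤ n := by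
    intro k
    induction k with
    | zero =>
      right
      simpa using Finset.card_le_card (Finset.subset_univ (availSet (stAt s 0)))
    | succ k ih =>
      by_cases h : (availSet (stAt s k)).Nonempty
      · rcases ih with he | hc
        · exact absurd he (Finset.nonempty_iff_ne_empty.mp h)
        · right
          have := card_avail_succ_lt s k h
          omega
      · left
        rw [Finset.not_nonempty_iff_eq_empty] at h
        rw [stAt_succ, psStep_eq' s _ (by rw [h]; simp)]
        exact h
    
  rcases key n with he | hc
  · exact he
  · rw [← Finset.card_eq_zero]; omega

theorem rem_final (s : Fin n → (Fin n ≃ Fin n)) (j : Fin n) : (stAt s n).rem j = 0 := by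
  have h1 := rem_nonneg s n j
  have h2 : j ∉ availSet (stAt s n) := by rw [avail_final]; exact Finset.notMem_empty j
  rw [mem_availSet] at h2
  linarith [not_lt.mp h2]

theorem avail_nonempty_lt (s : Fin n → (Fin n ≃ Fin n)) {k : ℕ}
    (h : (availSet (stAt s k)).Nonempty) : k < n := by
  by_contra hk
  have := avail_subset s (not_lt.mp hk)
  rw [avail_final] at this
  obtain ⟨j, hj⟩ := h
  exact Finset.notMem_empty j (this hj)
theorem sum_rate (s : Fin n → (Fin n ≃ Fin n)) (st : PSState n)
    (h : (availSet st).Nonempty) : ∑ j, rateOf s st h j = n := by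
  have := Finset.card_eq_sum_card_fiberwise
    (f := fun i => topOf s st h i) (s := Finset.univ) (t := Finset.univ)
    (fun x _ => Finset.mem_univ _)
  simpa [rateOf, Finset.card_univ] using this.symm

theorem sum_rem (s : Fin n → (Fin n ≃ Fin n)) (k : ℕ) :
    ∑ j, (stAt s k).rem j = n * (1 - (stAt s k).time) := by
  induction k with
  | zero =>
    simp [stAt_zero_rem, stAt_zero_time]
  | succ k ih =>
    by_cases h : (availSet (stAt s k)).Nonempty
    · have hrem : ∀ j, (stAt s (k+1)).rem j
          = (stAt s k).rem j - (rateOf s _ h j : ℝ) * deltaOf s _ h := by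
        intro j; rw [stAt_succ, psStep_rem s _ h j]
      have htime : (stAt s (k+1)).time = (stAt s k).time + deltaOf s _ h := by
        rw [stAt_succ, psStep_time s _ h]
      have hsum : ∑ j, ((rateOf s (stAt s k) h j : ℝ) * deltaOf s _ h)
          = (n : ℝ) * deltaOf s _ h := by
        rw [← Finset.sum_mul]
        congr 1
        rw [← Nat.cast_sum]
        exact_mod_cast congrArg Nat.cast (sum_rate s _ h)
      calc ∑ j, (stAt s (k+1)).rem j
          = ∑ j, ((stAt s k).rem j - (rateOf s _ h j : ℝ) * deltaOf s _ h) := by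
            exact Finset.sum_congr rfl (fun j _ => hrem j)
        _ = (∑ j, (stAt s k).rem j) - ∑ j, ((rateOf s _ h j : ℝ) * deltaOf s _ h) :=
            Finset.sum_sub_distrib _ _
        _ = n * (1 - (stAt s k).time) - n * deltaOf s _ h := by rw [ih, hsum]
        _ = n * (1 - (stAt s (k+1)).time) := by rw [htime]; ring
    · rw [stAt_succ, psStep_eq' s _ h]
      exact ih

theorem time_le_one (s : Fin n → (Fin n ≃ Fin n)) (hn : 0 < n) (k : ℕ) :
    (stAt s k).time ≤ 1 := by
  have h1 := sum_rem s k
  have h2 : 0 ≤ ∑ j, (stAt s k).rem j := Finset.sum_nonneg (fun j _ => rem_nonneg s k j)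
  have hn' : (0:ℝ) < n := by exact_mod_cast hn
  nlinarith

theorem dead_succ (s : Fin n → (Fin n ≃ Fin n)) (k : ℕ) {j : Fin n}
    (h : (stAt s k).rem j = 0) :
    (stAt s (k + 1)).rem j = 0 ∧ (stAt s (k + 1)).fin j = (stAt s k).fin j := by
  by_cases hA : (availSet (stAt s k)).Nonempty
  · have hj : j ∉ availSet (stAt s k) := by rw [mem_availSet, h]; exact lt_irrefl 0
    have hr : rateOf s _ hA j = 0 := rateOf_eq_zero s _ hA hj
    constructor
    · rw [stAt_succ, psStep_rem s _ hA j, hr]; simp [h]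
    · rw [stAt_succ, psStep_fin s _ hA j, if_neg]
      rw [h]
      simp
  · rw [stAt_succ, psStep_eq' s _ hA]; exact ⟨h, rfl⟩

theorem dead_frozen (s : Fin n → (Fin n ≃ Fin n)) {k : ℕ} {j : Fin n}
    (h : (stAt s k).rem j = 0) :
    ∀ m, k ≤ m → (stAt s m).rem j = 0 ∧ (stAt s m).fin j = (stAt s k).fin j := by
  intro m hm
  induction m with
  | zero => rw [Nat.le_zero] at hm; subst hm; exact ⟨h, rfl⟩
  | succ m ih =>
    rcases Nat.eq_or_lt_of_le hm with rfl | hlt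
    · exact ⟨h, rfl⟩
    · obtain ⟨h1, h2⟩ := ih (Nat.lt_succ_iff.mp hlt)
      obtain ⟨h3, h4⟩ := dead_succ s m h1
      exact ⟨h3, by rw [h4, h2]⟩

theorem fin_le_time (s : Fin n → (Fin n ≃ Fin n)) :
    ∀ k, ∀ j : Fin n, (stAt s k).rem j = 0 → (stAt s k).fin j ≤ (stAt s k).time := by
  intro k
  induction k with
  | zero =>
    intro j h
    rw [stAt_zero_rem] at h
    norm_num at h
  | succ k ih =>
    intro j h
    by_cases hA : (availSet (stAt s k)).Nonempty
    · by_cases hd : (stAt s k).rem j = 0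
      · obtain ⟨_, hfin⟩ := dead_succ s k hd
        rw [hfin]
        exact (ih j hd).trans (time_succ_le s k)
      · have halive : 0 < (stAt s k).rem j := lt_of_le_of_ne (rem_nonneg s k j) (Ne.symm hd)
        have hrem : (stAt s k).rem j - (rateOf s _ hA j : ℝ) * deltaOf s _ hA = 0 := by
          rw [← psStep_rem s _ hA j, ← stAt_succ]; exact h
        rw [stAt_succ, psStep_fin s _ hA j, if_pos ⟨halive, le_of_eq hrem⟩,
          psStep_time s _ hA]
    · rw [stAt_succ, psStep_eq' s _ hA] at h ⊢
      exact ih j h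

theorem record_eq (s : Fin n → (Fin n ≃ Fin n)) {k : ℕ} {j : Fin n}
    (hA : (availSet (stAt s k)).Nonempty) (halive : 0 < (stAt s k).rem j)
    (hdead : (stAt s (k + 1)).rem j = 0) :
    (stAt s (k + 1)).fin j = (stAt s (k + 1)).time := by
  have hrem : (stAt s k).rem j - (rateOf s _ hA j : ℝ) * deltaOf s _ hA ≤ 0 := by
    rw [← psStep_rem s _ hA j, ← stAt_succ, hdead]
  rw [stAt_succ, psStep_fin s _ hA j, if_pos ⟨halive, hrem⟩, psStep_time s _ hA]

theorem alive_lt_fin (s : Fin n → (Fin n ≃ Fin n)) {k : ℕ} {j : Fin n}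
    (h : 0 < (stAt s k).rem j) : (stAt s k).time < (stAt s n).fin j := by
  have haux : ∀ d k', k' + d = n → 0 < (stAt s k').rem j →
      (stAt s k').time < (stAt s n).fin j := by
    intro d
    induction d with
    | zero =>
      intro k' hk' halive
      rw [Nat.add_zero] at hk'
      subst hk'
      rw [rem_final] at halive
      exact absurd halive (lt_irrefl 0)
    | succ d ihd =>
      intro k' hk' halive
      have hA : (availSet (stAt s k')).Nonempty := ⟨j, mem_availSet.mpr halive⟩
      have htlt : (stAt s k').time < (stAt s (k' + 1)).time := by
        rw [stAt_succ, psStep_time s _ hA]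
        linarith [delta_pos s _ hA]
      by_cases hd : (stAt s (k' + 1)).rem j = 0
      · have hrec := record_eq s hA halive hd
        have hfroz := (dead_frozen s hd n (by omega)).2
        rw [hfroz, hrec]
        exact htlt
      · have halive' : 0 < (stAt s (k' + 1)).rem j :=
          lt_of_le_of_ne (rem_nonneg s (k' + 1) j) (Ne.symm hd)
        exact htlt.trans (ihd (k' + 1) (by omega) halive')
  have hkn : k < n := avail_nonempty_lt s ⟨j, mem_availSet.mpr h⟩
  exact haux (n - k) k (by omega) h

theorem dead_fin_le (s : Fin n → (Fin n ≃ Fin n)) {k : ℕ} {j : Fin n}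
    (h : (stAt s k).rem j = 0) : (stAt s n).fin j ≤ (stAt s k).time := by
  rcases le_or_gt k n with hk | hk
  · have := (dead_frozen s h n hk).2
    rw [this]
    exact fin_le_time s k j h
  · have h1 := fin_le_time s n j (rem_final s j)
    exact h1.trans (time_mono s (le_of_lt hk))

theorem dead_of_fin_le (s : Fin n → (Fin n ≃ Fin n)) {k : ℕ} {j : Fin n}
    (h : (stAt s n).fin j ≤ (stAt s k).time) : (stAt s k).rem j = 0 := by
  by_contra hne
  have halive : 0 < (stAt s k).rem j := lt_of_le_of_ne (rem_nonneg s k j) (Ne.symm hne)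
  exact absurd h (not_le.mpr (alive_lt_fin s halive))

theorem fin_nonneg (s : Fin n → (Fin n ≃ Fin n)) : ∀ k, ∀ j : Fin n, 0 ≤ (stAt s k).fin j := by
  intro k
  induction k with
  | zero => intro j; rw [stAt_zero_fin]; norm_num
  | succ k ih =>
    intro j
    by_cases hA : (availSet (stAt s k)).Nonempty
    · rw [stAt_succ, psStep_fin s _ hA j]
      split
      · have := time_nonneg s k
        have := delta_pos s _ hA
        linarith
      · exact ih j
    · rw [stAt_succ, psStep_eq' s _ hA]; exact ih j

theorem psTime_eq (s : Fin n → (Fin n ≃ Fin n)) (j : Fin n) :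
    psTime s j = (stAt s n).fin j := rfl

theorem psTime_nonneg (s : Fin n → (Fin n ≃ Fin n)) (j : Fin n) : 0 ≤ psTime s j :=
  fin_nonneg s n j

theorem psTime_le_one (s : Fin n → (Fin n ≃ Fin n)) (hn : 0 < n) (j : Fin n) :
    psTime s j ≤ 1 := by
  rw [psTime_eq]
  exact (fin_le_time s n j (rem_final s j)).trans (time_le_one s hn n)

theorem time_succ_le_fin (s : Fin n → (Fin n ≃ Fin n)) {k : ℕ} {j : Fin n}
    (hA : (availSet (stAt s k)).Nonempty) (halive : 0 < (stAt s k).rem j) :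
    (stAt s (k + 1)).time ≤ (stAt s n).fin j := by
  by_cases hd : (stAt s (k + 1)).rem j = 0
  · have hrec := record_eq s hA halive hd
    have hkn : k < n := avail_nonempty_lt s hA
    have hfroz := (dead_frozen s hd n (by omega)).2
    rw [hfroz, hrec]
  · have halive' : 0 < (stAt s (k + 1)).rem j :=
      lt_of_le_of_ne (rem_nonneg s (k + 1) j) (Ne.symm hd)
    exact le_of_lt (alive_lt_fin s halive')

theorem time_attain (s : Fin n → (Fin n ≃ Fin n)) (j : Fin n) (hn : 0 < n) :
    ∃ l, l ≤ n ∧ (stAt s l).time = psTime s j := by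
  have hfind : ∀ k, (stAt s k).rem j = 0 →
      ∃ l, l < k ∧ 0 < (stAt s l).rem j ∧ (stAt s (l + 1)).rem j = 0 := by
    intro k
    induction k with
    | zero => intro h; rw [stAt_zero_rem] at h; norm_num at h
    | succ k ih =>
      intro h
      by_cases hd : (stAt s k).rem j = 0
      · obtain ⟨l, hl, h1, h2⟩ := ih hd
        exact ⟨l, by omega, h1, h2⟩
      · exact ⟨k, by omega, lt_of_le_of_ne (rem_nonneg s k j) (Ne.symm hd), h⟩
  obtain ⟨l, hl, halive, hdead⟩ := hfind n (rem_final s j)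
  have hA : (availSet (stAt s l)).Nonempty := ⟨j, mem_availSet.mpr halive⟩
  have hrec := record_eq s hA halive hdead
  have hfroz := (dead_frozen s hdead n (by omega)).2
  refine ⟨l + 1, by omega, ?_⟩
  rw [psTime_eq, hfroz, hrec]
theorem psProb_def (s : Fin n → (Fin n ≃ Fin n)) (i j : Fin n) :
    psProb s i j = (stAt s n).cons i j := rfl

theorem psProb_nonneg (s : Fin n → (Fin n ≃ Fin n)) (i j : Fin n) : 0 ≤ psProb s i j :=
  cons_nonneg s n i j

theorem sum_cons_rem (s : Fin n → (Fin n ≃ Fin n)) :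
    ∀ k, ∀ j : Fin n, (∑ i, (stAt s k).cons i j) + (stAt s k).rem j = 1 := by
  intro k
  induction k with
  | zero => intro j; simp [stAt_zero_cons, stAt_zero_rem]
  | succ k ih =>
    intro j
    by_cases hA : (availSet (stAt s k)).Nonempty
    · have hsum : ∑ i, (if topOf s (stAt s k) hA i = j then deltaOf s _ hA else 0)
          = (rateOf s (stAt s k) hA j : ℝ) * deltaOf s _ hA := by
        rw [← Finset.sum_filter, Finset.sum_const, rateOf]
        simp [nsmul_eq_mul]
      have hc : ∀ i, (stAt s (k+1)).cons i j
          = (stAt s k).cons i j + (if topOf s (stAt s k) hA i = j then deltaOf s _ hA else 0) := by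
        intro i; rw [stAt_succ, psStep_cons s _ hA]
      have hr : (stAt s (k+1)).rem j
          = (stAt s k).rem j - (rateOf s (stAt s k) hA j : ℝ) * deltaOf s _ hA := by
        rw [stAt_succ, psStep_rem s _ hA]
      calc (∑ i, (stAt s (k+1)).cons i j) + (stAt s (k+1)).rem j
          = ((∑ i, (stAt s k).cons i j)
              + ∑ i, (if topOf s (stAt s k) hA i = j then deltaOf s _ hA else 0))
            + (stAt s (k+1)).rem j := by
            rw [← Finset.sum_add_distrib]
            congr 1
            exact Finset.sum_congr rfl (fun i _ => hc i)
        _ = (∑ i, (stAt s k).cons i j) + (stAt s k).rem j := by rw [hsum, hr]; ring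
        _ = 1 := ih j
    · rw [stAt_succ, psStep_eq' s _ hA]
      exact ih j

theorem psProb_total (s : Fin n → (Fin n ≃ Fin n)) (j : Fin n) :
    ∑ i, psProb s i j = 1 := by
  have := sum_cons_rem s n j
  rw [rem_final s j] at this
  simpa [psProb_def] using this

/-- Lower bound on consumption: if from time `B` onwards agent `i` always eats `j`
while `j` is alive, then she gets at least `t_j - B` of it. -/
theorem cons_lower (s : Fin n → (Fin n ≃ Fin n)) (i j : Fin n) (B : ℝ)
    (hanchor : ∃ l, l ≤ n ∧ (stAt s l).time = B)
    (H : ∀ k (hA : (availSet (stAt s k)).Nonempty), B ≤ (stAt s k).time →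
      0 < (stAt s k).rem j → topOf s (stAt s k) hA i = j) :
    psTime s j - B ≤ psProb s i j := by
  have aux : ∀ d k, k + d = n → B ≤ (stAt s k).time →
      psTime s j - (stAt s k).time ≤ (stAt s n).cons i j - (stAt s k).cons i j := by
    intro d
    induction d with
    | zero =>
      intro k hk _
      have hkn : k = n := by omega
      rw [hkn]
      have h1 : psTime s j ≤ (stAt s n).time := by
        rw [psTime_eq]; exact fin_le_time s n j (rem_final s j)
      linarith
    | succ d ihd =>
      intro k hk hB
      by_cases hA : (availSet (stAt s k)).Nonempty
      · by_cases halive : 0 < (stAt s k).rem j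
        · have htop := H k hA hB halive
          have hc : (stAt s (k+1)).cons i j = (stAt s k).cons i j + deltaOf s _ hA := by
            rw [stAt_succ, psStep_cons s _ hA, if_pos htop]
          have ht : (stAt s (k+1)).time = (stAt s k).time + deltaOf s _ hA := by
            rw [stAt_succ, psStep_time s _ hA]
          have hB' : B ≤ (stAt s (k+1)).time := hB.trans (time_succ_le s k)
          have := ihd (k+1) (by omega) hB'
          rw [hc, ht] at *
          linarith
        · have hdead : (stAt s k).rem j = 0 :=
            le_antisymm (not_lt.mp halive) (rem_nonneg s k j)
          have h1 : psTime s j ≤ (stAt s k).time := by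
            rw [psTime_eq]; exact dead_fin_le s hdead
          have h2 : (stAt s k).cons i j ≤ (stAt s n).cons i j :=
            cons_mono s (by omega) i j
          linarith
      · have hstep : stAt s (k+1) = stAt s k := by rw [stAt_succ, psStep_eq' s _ hA]
        have := ihd (k+1) (by omega) (by rw [hstep]; exact hB)
        rw [hstep] at this
        exact this
  obtain ⟨l, hl, hlB⟩ := hanchor
  have := aux (n - l) l (by omega) (le_of_eq hlB.symm)
  rw [hlB] at this
  have hc0 : 0 ≤ (stAt s l).cons i j := cons_nonneg s l i j
  rw [psProb_def]
  linarith

/-- Upper bound on consumption: if agent `i` eats `j` only after time `B` (and only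
while `j` is alive), then she gets at most `t_j - B` of it. -/
theorem cons_upper (s : Fin n → (Fin n ≃ Fin n)) (i j : Fin n) (B : ℝ)
    (hB0 : 0 ≤ B) (hBT : B ≤ psTime s j)
    (H : ∀ k (hA : (availSet (stAt s k)).Nonempty), topOf s (stAt s k) hA i = j →
      B ≤ (stAt s k).time ∧ 0 < (stAt s k).rem j) :
    psProb s i j ≤ psTime s j - B := by
  set tF := psTime s j with htF
  have aux : ∀ d k, k + d = n →
      (stAt s n).cons i j - (stAt s k).cons i j
        ≤ tF - max B (min (stAt s k).time tF) := by
    intro d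
    induction d with
    | zero =>
      intro k hk
      have hkn : k = n := by omega
      rw [hkn]
      have : max B (min (stAt s n).time tF) ≤ tF :=
        max_le hBT (min_le_right _ _)
      linarith
    | succ d ihd =>
      intro k hk
      by_cases hA : (availSet (stAt s k)).Nonempty
      · by_cases htop : topOf s (stAt s k) hA i = j
        · obtain ⟨hBk, halive⟩ := H k hA htop
          have hklt : (stAt s k).time < tF := by
            rw [htF, psTime_eq]; exact alive_lt_fin s halive
          have ht1 : (stAt s (k+1)).time ≤ tF := by
            rw [htF, psTime_eq]; exact time_succ_le_fin s hA halive
          have hc : (stAt s (k+1)).cons i j = (stAt s k).cons i j + deltaOf s _ hA := by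
            rw [stAt_succ, psStep_cons s _ hA, if_pos htop]
          have ht : (stAt s (k+1)).time = (stAt s k).time + deltaOf s _ hA := by
            rw [stAt_succ, psStep_time s _ hA]
          have hm1 : max B (min (stAt s k).time tF) = (stAt s k).time := by
            rw [min_eq_left (le_of_lt hklt), max_eq_right hBk]
          have hm2 : max B (min (stAt s (k+1)).time tF) = (stAt s (k+1)).time := by
            rw [min_eq_left ht1, max_eq_right (hBk.trans (time_succ_le s k))]
          have := ihd (k+1) (by omega)
          rw [hm2, hc, ht] at this
          rw [hm1]
          linarith
        · have hc : (stAt s (k+1)).cons i j = (stAt s k).cons i j := by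
            rw [stAt_succ, psStep_cons s _ hA, if_neg htop, add_zero]
          have hmono : max B (min (stAt s k).time tF)
              ≤ max B (min (stAt s (k+1)).time tF) :=
            max_le_max le_rfl (min_le_min (time_succ_le s k) le_rfl)
          have := ihd (k+1) (by omega)
          rw [hc] at this
          linarith
      · have hstep : stAt s (k+1) = stAt s k := by rw [stAt_succ, psStep_eq' s _ hA]
        have := ihd (k+1) (by omega)
        rw [hstep] at this
        exact this
  have := aux n 0 (by omega)
  rw [stAt_zero_time, stAt_zero_cons] at this
  have hmin : min (0:ℝ) tF = 0 := min_eq_left (htF ▸ psTime_nonneg s j)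
  rw [hmin, max_eq_left hB0] at this
  rw [psProb_def]
  linarith

theorem cons_pos_witness (s : Fin n → (Fin n ≃ Fin n)) {i j : Fin n}
    (h : 0 < psProb s i j) :
    ∃ k, ∃ hA : (availSet (stAt s k)).Nonempty, topOf s (stAt s k) hA i = j := by
  have aux : ∀ K, 0 < (stAt s K).cons i j →
      ∃ k, ∃ hA : (availSet (stAt s k)).Nonempty, topOf s (stAt s k) hA i = j := by
    intro K
    induction K with
    | zero => intro hc; rw [stAt_zero_cons] at hc; norm_num at hc
    | succ K ih =>
      intro hc
      by_cases hA : (availSet (stAt s K)).Nonempty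
      · by_cases htop : topOf s (stAt s K) hA i = j
        · exact ⟨K, hA, htop⟩
        · have : (stAt s (K+1)).cons i j = (stAt s K).cons i j := by
            rw [stAt_succ, psStep_cons s _ hA, if_neg htop, add_zero]
          rw [this] at hc
          exact ih hc
      · have hstep : stAt s (K+1) = stAt s K := by rw [stAt_succ, psStep_eq' s _ hA]
        rw [hstep] at hc
        exact ih hc
  exact aux n (by rw [← psProb_def]; exact h)
/-- Items strictly preferred to `j` under ordering `e`. -/
noncomputable def betSet (e : Fin n ≃ Fin n) (j : Fin n) : Finset (Fin n) :=
  Finset.univ.filter (fun m => e.symm m < e.symm j)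

/-- Key comparison: if `p` and `q` differ only in the report of agent `i`, then no
item is consumed more than twice as fast in `p` as in `q`. -/
theorem psTime_comp (hn : 0 < n) (p q : Fin n → (Fin n ≃ Fin n)) (i : Fin n)
    (hpq : ∀ k, k ≠ i → p k = q k) : ∀ j, psTime p j ≤ 2 * psTime q j := by
  have core : ∀ j : Fin n, (∀ m, psTime q m < psTime q j → psTime p m ≤ 2 * psTime q m) →
      psTime p j ≤ 2 * psTime q j := by
    intro j IH
    by_contra hc
    push_neg at hc
    set T2 := psTime q j with hT2def
    have hT2nn : 0 ≤ T2 := psTime_nonneg q j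
    have hT2lt : 2 * T2 < 1 := by
      by_contra hle
      push_neg at hle
      exact absurd ((psTime_le_one p hn j).trans hle) (not_le.mpr hc)
    -- q-side: agent i gets at most T2 of item j
    have hqi : psProb q i j ≤ T2 - 0 := by
      apply cons_upper q i j 0 le_rfl (by simpa using hT2nn)
      intro k hA htop
      exact ⟨time_nonneg q k, mem_availSet.mp (htop ▸ topOf_mem q _ hA i)⟩
    have hqtot := psProb_total q j
    set F := Finset.univ.filter (fun k => k ≠ i ∧ 0 < psProb q k j) with hFdef
    have hFsub : F ⊆ Finset.univ.erase i := by
      intro k hk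
      rw [hFdef, Finset.mem_filter] at hk
      exact Finset.mem_erase.mpr ⟨hk.2.1, Finset.mem_univ k⟩
    have hFsum : 1 - T2 ≤ ∑ k ∈ F, psProb q k j := by
      have h1 : ∑ k ∈ Finset.univ.erase i, psProb q k j + psProb q i j = 1 := by
        rw [Finset.sum_erase_add _ _ (Finset.mem_univ i)]
        exact hqtot
      have h2 : ∑ k ∈ F, psProb q k j = ∑ k ∈ Finset.univ.erase i, psProb q k j := by
        apply Finset.sum_subset hFsub
        intro k hk hknot
        rw [Finset.mem_erase] at hk
        rw [hFdef, Finset.mem_filter] at hknot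
        push_neg at hknot
        have := hknot (Finset.mem_univ k) hk.1
        linarith [psProb_nonneg q k j, this]
      rw [h2, ← h1] at *
      linarith
    have hFne : F.Nonempty := by
      rw [Finset.nonempty_iff_ne_empty]
      intro hFe
      rw [hFe, Finset.sum_empty] at hFsum
      linarith
    -- per-agent bounds
    have step : ∀ k' ∈ F, ∃ B : ℝ, 0 ≤ B ∧
        psProb q k' j ≤ T2 - B ∧ psTime p j - 2 * B ≤ psProb p k' j := by
      intro k' hk'
      rw [hFdef, Finset.mem_filter] at hk'
      obtain ⟨_, hne, hq0⟩ := hk'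
      have hpe : p k' = q k' := hpq k' hne
      by_cases hBet : (betSet (q k') j).Nonempty
      · -- nonempty set of better items
        set B := (betSet (q k') j).sup' hBet (psTime q) with hBdef
        -- all better items die strictly before T2 in run q
        obtain ⟨k0, hA0, htop0⟩ := cons_pos_witness q hq0
        have hjal : 0 < (stAt q k0).rem j := mem_availSet.mp (htop0 ▸ topOf_mem q _ hA0 k')
        have hdieq : ∀ m ∈ betSet (q k') j, psTime q m ≤ (stAt q k0).time := by
          intro m hm
          rw [betSet, Finset.mem_filter] at hm
          have hnm := topOf_better_not_mem q _ hA0 htop0 hm.2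
          have hdead : (stAt q k0).rem m = 0 :=
            le_antisymm (not_lt.mp (fun hlt => hnm (mem_availSet.mpr hlt))) (rem_nonneg q k0 m)
          rw [psTime_eq]
          exact dead_fin_le q hdead
        have hBltT2 : B < T2 := by
          rw [hBdef, Finset.sup'_lt_iff]
          intro m hm
          exact lt_of_le_of_lt (hdieq m hm) (by rw [hT2def, psTime_eq]; exact alive_lt_fin q hjal)
        have hB0 : 0 ≤ B := by
          obtain ⟨m, hm, hmeq⟩ := Finset.exists_mem_eq_sup' hBet (psTime q)
          rw [hBdef, hmeq]
          exact psTime_nonneg q m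
        have hqbound : psProb q k' j ≤ T2 - B := by
          apply cons_upper q k' j B hB0 (le_of_lt hBltT2)
          intro k hA htop
          refine ⟨?_, mem_availSet.mp (htop ▸ topOf_mem q _ hA k')⟩
          rw [hBdef]
          apply Finset.sup'_le
          intro m hm
          rw [betSet, Finset.mem_filter] at hm
          have hnm := topOf_better_not_mem q _ hA htop hm.2
          have hdead : (stAt q k).rem m = 0 :=
            le_antisymm (not_lt.mp (fun hlt => hnm (mem_availSet.mpr hlt))) (rem_nonneg q k m)
          rw [psTime_eq]
          exact dead_fin_le q hdead
        -- p-side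
        set Bp := (betSet (q k') j).sup' hBet (psTime p) with hBpdef
        have hBp2 : Bp ≤ 2 * B := by
          rw [hBpdef]
          apply Finset.sup'_le
          intro m hm
          have hmlt : psTime q m < T2 :=
            lt_of_le_of_lt (hdieq m hm)
              (by rw [hT2def, psTime_eq]; exact alive_lt_fin q hjal)
          calc psTime p m ≤ 2 * psTime q m := IH m hmlt
            _ ≤ 2 * B := by
              have := Finset.le_sup' (psTime q) hm
              rw [hBdef]
              linarith
        have hpbound : psTime p j - Bp ≤ psProb p k' j := by
          obtain ⟨ms, hms, hmseq⟩ := Finset.exists_mem_eq_sup' hBet (psTime p)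
          obtain ⟨l, hl, hleq⟩ := time_attain p ms hn
          apply cons_lower p k' j Bp ⟨l, hl, by rw [hleq, hBpdef, hmseq]⟩
          intro k hA hBk halive
          apply topOf_eq p _ hA k' (mem_availSet.mpr halive)
          intro r hr
          have hmem : p k' r ∈ betSet (q k') j := by
            rw [betSet, Finset.mem_filter]
            refine ⟨Finset.mem_univ _, ?_⟩
            rw [← hpe]
            simpa using hr
          have hdle : psTime p (p k' r) ≤ (stAt p k).time :=
            le_trans (by rw [hBpdef] at hBk; exact le_trans (Finset.le_sup' (psTime p) hmem) hBk)
              le_rfl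
          have hdead : (stAt p k).rem (p k' r) = 0 :=
            dead_of_fin_le p (by rw [← psTime_eq]; exact hdle)
          rw [mem_availSet]
          rw [hdead]
          exact lt_irrefl 0
        exact ⟨B, hB0, hqbound, by linarith⟩
      · -- no better items
        have hqbound : psProb q k' j ≤ T2 - 0 := by
          apply cons_upper q k' j 0 le_rfl (by simpa using hT2nn)
          intro k hA htop
          exact ⟨time_nonneg q k, mem_availSet.mp (htop ▸ topOf_mem q _ hA k')⟩
        have hpbound : psTime p j - 0 ≤ psProb p k' j := by
          apply cons_lower p k' j 0 ⟨0, by omega, stAt_zero_time p⟩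
          intro k hA _ halive
          apply topOf_eq p _ hA k' (mem_availSet.mpr halive)
          intro r hr
          exfalso
          apply hBet
          refine ⟨p k' r, ?_⟩
          rw [betSet, Finset.mem_filter]
          refine ⟨Finset.mem_univ _, ?_⟩
          rw [← hpe]
          simpa using hr
        exact ⟨0, le_rfl, hqbound, by linarith⟩
    choose Bf hBf0 hBfq hBfp using step
    -- final chain
    have hsum1 : ∑ k' ∈ F, psProb p k' j ≤ 1 := by
      rw [← psProb_total p j]
      apply Finset.sum_le_sum_of_subset_of_nonneg (Finset.subset_univ F)
      intro k _ _
      exact psProb_nonneg p k j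
    have hsum2 : ∑ k' ∈ F.attach, (psTime p j - 2 * Bf k'.1 k'.2) ≤ ∑ k' ∈ F, psProb p k' j := by
      rw [← Finset.sum_attach F (fun k' => psProb p k' j)]
      apply Finset.sum_le_sum
      intro k' _
      exact hBfp k'.1 k'.2
    have hsum3 : ∑ k' ∈ F.attach, (2 : ℝ) * psProb q k'.1 j
        < ∑ k' ∈ F.attach, (psTime p j - 2 * Bf k'.1 k'.2) := by
      apply Finset.sum_lt_sum_of_nonempty (Finset.attach_nonempty_iff.mpr hFne)
      intro k' _
      have h1 := hBfq k'.1 k'.2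
      linarith
    have hsum4 : 2 * (1 - T2) ≤ ∑ k' ∈ F.attach, (2 : ℝ) * psProb q k'.1 j := by
      rw [← Finset.mul_sum]
      rw [Finset.sum_attach F (fun k' => psProb q k' j)]
      linarith
    linarith
  -- strong induction on the number of earlier-dying items
  have key : ∀ N : ℕ, ∀ j : Fin n,
      (Finset.univ.filter (fun m => psTime q m < psTime q j)).card ≤ N →
      psTime p j ≤ 2 * psTime q j := by
    intro N
    induction N with
    | zero =>
      intro j hcard
      apply core
      intro m hm
      exfalso
      have : m ∈ Finset.univ.filter (fun m => psTime q m < psTime q j) := by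
        simp [hm]
      have := Finset.card_pos.mpr ⟨m, this⟩
      omega
    | succ N ih =>
      intro j hcard
      apply core
      intro m hm
      apply ih
      have hss : (Finset.univ.filter (fun x => psTime q x < psTime q m))
          ⊂ (Finset.univ.filter (fun x => psTime q x < psTime q j)) := by
        constructor
        · intro x hx
          rw [Finset.mem_filter] at hx ⊢
          exact ⟨hx.1, hx.2.trans hm⟩
        · intro hsub
          have hmm : m ∈ Finset.univ.filter (fun x => psTime q x < psTime q j) := by
            simp [hm]
          have := hsub hmm
          rw [Finset.mem_filter] at this
          exact absurd this.2 (lt_irrefl _)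
      have := Finset.card_lt_card hss
      omega
  intro j
  exact key _ j le_rfl
/-- By deviating to put item `j` first, agent `i` obtains at least the (new)
consumption time of `j`, which is at least half the original one. -/
theorem deviation_bound (s : Fin n → (Fin n ≃ Fin n)) (hn : 0 < n) (i j : Fin n) :
    psTime s j / 2 ≤ psProb (Function.update s i (Equiv.swap (⟨0, hn⟩ : Fin n) j)) i j := by
  set e : Fin n ≃ Fin n := Equiv.swap (⟨0, hn⟩ : Fin n) j with he
  set q := Function.update s i e with hq
  have hqi : q i = e := by rw [hq]; exact Function.update_self i e s
  have hcomp : psTime s j ≤ 2 * psTime q j :=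
    psTime_comp hn s q i (fun k hk => (Function.update_of_ne hk e s).symm) j
  have hlow : psTime q j - 0 ≤ psProb q i j := by
    apply cons_lower q i j 0 ⟨0, by omega, stAt_zero_time q⟩
    intro k hA _ halive
    apply topOf_eq q _ hA i (mem_availSet.mpr halive)
    intro r hr
    exfalso
    have h1 : (q i).symm j = (⟨0, hn⟩ : Fin n) := by
      rw [hqi, he, Equiv.symm_swap, Equiv.swap_apply_right]
    rw [h1] at hr
    have : (r : ℕ) < 0 := hr
    omega
  linarith

end PSAux

/-- If `u` is a profile of nonnegative true valuations and `s` is a pure Nash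
equilibrium of Probabilistic Serial at `u`, then for every agent `i` and every
item `j`, the expected utility of `i` at `s` is at least `(1/4) · t_j(s) · u_i(j)`. -/
theorem ps_equilibrium_utility {n : ℕ} (u : Fin n → Fin n → ℝ)
    (s : Fin n → (Fin n ≃ Fin n)) (hu : ∀ i j, 0 ≤ u i j) (hs : PSNash u s) :
    ∀ (i : Fin n) (j : Fin n),
      (1 / 4 : ℝ) * psTime s j * u i j ≤ ∑ ℓ, psProb s i ℓ * u i ℓ := by
  intro i j
  have hn : 0 < n := j.pos
  have hdev := PSAux.deviation_bound s hn i j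
  set e : Fin n ≃ Fin n := Equiv.swap (⟨0, hn⟩ : Fin n) j with he
  have hNash := hs i e
  have hsingle : psProb (Function.update s i e) i j * u i j
      ≤ ∑ ℓ, psProb (Function.update s i e) i ℓ * u i ℓ := by
    apply Finset.single_le_sum (f := fun ℓ => psProb (Function.update s i e) i ℓ * u i ℓ)
    · intro ℓ _
      exact mul_nonneg (PSAux.psProb_nonneg _ i ℓ) (hu i ℓ)
    · exact Finset.mem_univ j
  have huj : 0 ≤ u i j := hu i j
  have htj : 0 ≤ psTime s j := PSAux.psTime_nonneg s j
  have h1 : psTime s j / 2 * u i j ≤ psProb (Function.update s i e) i j * u i j :=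
    mul_le_mul_of_nonneg_right hdev huj
  nlinarith
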